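/- Let η ∈ (0,1) and k ∈ ℝ, take λ = 1, and define for t ≥ 0 the function ℐ(t) = ((1+η²)/(4η))² · exp(−4(k + 2ηt/(1+η))) · (e^{4k} + e^{4ηt/(1+η)} − 1) · ( e^{4(k + ηt/(1+η))} − (e^{4k} − 1)·cosh²(2ηt/(1+η)) ). Then ℐ(t) converges to ((1+η²)/(4η))² · (3 + e^{−4k})/4 as t → ∞. Consequently the asymptotic logarithmic negativity equals max{0, −(1/2)·log₂((3 + e^{−4k})·(1+η²)²/(16η²))}. -/

import Mathlib

open Filter Real

theorem asymptotic_entanglement_critical (η k : ℝ)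
    (hη : η ∈ Set.Ioo (0 : ℝ) 1)
    (I : ℝ → ℝ)
    (hI : ∀ t : ℝ, I t =
      ((1 + η ^ 2) / (4 * η)) ^ 2 * Real.exp (-4 * (k + 2 * η * t / (1 + η))) *
        (Real.exp (4 * k) + Real.exp (4 * η * t / (1 + η)) - 1) *
        (Real.exp (4 * (k + η * t / (1 + η))) -
          (Real.exp (4 * k) - 1) * Real.cosh (2 * η * t / (1 + η)) ^ 2)) :
    Filter.Tendsto I Filter.atTop
      (nhds (((1 + η ^ 2) / (4 * η)) ^ 2 * (3 + Real.exp (-4 * k)) / 4)) ∧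
    Filter.Tendsto (fun t => max 0 (-(1 / 2) * Real.logb 2 (4 * I t))) Filter.atTop
      (nhds (max 0 (-(1 / 2) *
        Real.logb 2 ((3 + Real.exp (-4 * k)) * (1 + η ^ 2) ^ 2 / (16 * η ^ 2))))) := by
  obtain ⟨hη0, hη1⟩ := hη
  have hη1' : (0:ℝ) < 1 + η := by linarith
  set C : ℝ := ((1 + η ^ 2) / (4 * η)) ^ 2 with hC
  set q : ℝ := Real.exp (4 * k) with hq
  have hqpos : 0 < q := Real.exp_pos _
  set c : ℝ := 2 * η / (1 + η) with hc
  have hcpos : 0 < c := by positivity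
  set f : ℝ → ℝ := fun x => C * Real.exp (-4 * k) *
      ((q * x ^ 2 + 1 - x ^ 2) * (q - (q - 1) * (1 + 2 * x ^ 2 + x ^ 4) / 4)) with hf
  have key : ∀ t : ℝ, I t = f (Real.exp (-(c * t))) := by
    intro t
    have hx : Real.exp (-(c * t)) = Real.exp (-(c * t)) := rfl
    set x : ℝ := Real.exp (-(c * t)) with hxdef
    have hxpos : 0 < x := Real.exp_pos _
    have hx2 : x ^ 2 = Real.exp (-(4 * η * t / (1 + η))) := by
      rw [hxdef, ← Real.exp_nat_mul, hc]; ring_nf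
    have hx4 : x ^ 4 = Real.exp (-(8 * η * t / (1 + η))) := by
      rw [hxdef, ← Real.exp_nat_mul, hc]; ring_nf
    have e1 : Real.exp (-4 * (k + 2 * η * t / (1 + η)))
        = Real.exp (-4 * k) * x ^ 4 := by
      rw [hx4, ← Real.exp_add]; ring_nf
    have e2 : Real.exp (4 * η * t / (1 + η)) = 1 / x ^ 2 := by
      rw [hx2, one_div, ← Real.exp_neg, neg_neg]
    have e3 : Real.exp (4 * (k + η * t / (1 + η))) = q / x ^ 2 := by
      rw [hx2, hq, ← Real.exp_sub]
      congr 1; ring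
    have hct : c * t = 2 * η * t / (1 + η) := by rw [hc]; ring
    have e4 : Real.cosh (2 * η * t / (1 + η)) = (1 / x + x) / 2 := by
      rw [Real.cosh_eq, hxdef, ← hct, one_div, ← Real.exp_neg, neg_neg]
    rw [hI t, e1, e2, e3, e4, hf]
    have hq' : Real.exp (-4 * k) = 1 / q := by
      rw [hq, one_div, ← Real.exp_neg]; congr 1; ring
    field_simp
    ring
  have hgt : Tendsto (fun t : ℝ => Real.exp (-(c * t))) atTop (nhds 0) := by
    apply Real.tendsto_exp_atBot.comp
    exact tendsto_neg_atBot_iff.mpr (Tendsto.const_mul_atTop hcpos tendsto_id)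
  have hfc : Continuous f := by fun_prop
  have hL : f 0 = C * (3 + Real.exp (-4 * k)) / 4 := by
    have hq' : Real.exp (-4 * k) * q = 1 := by
      rw [hq, ← Real.exp_add]; norm_num
    rw [hf]; simp only
    nlinarith [hq']
  have h1 : Tendsto I atTop (nhds (C * (3 + Real.exp (-4 * k)) / 4)) := by
    rw [show I = (fun t => f (Real.exp (-(c * t)))) from funext key]
    rw [← hL]
    exact (hfc.tendsto 0).comp hgt
  refine ⟨h1, ?_⟩
  have hLpos : 0 < C * (3 + Real.exp (-4 * k)) / 4 := by
    have : 0 < C := by positivity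
    positivity
  have harg : (3 + Real.exp (-4 * k)) * (1 + η ^ 2) ^ 2 / (16 * η ^ 2)
      = 4 * (C * (3 + Real.exp (-4 * k)) / 4) := by
    rw [hC]; field_simp; ring
  rw [harg]
  have hcont : ContinuousAt (fun y : ℝ => max 0 (-(1 / 2) * Real.logb 2 (4 * y)))
      (C * (3 + Real.exp (-4 * k)) / 4) := by
    apply ContinuousAt.sup continuousAt_const
    apply ContinuousAt.mul continuousAt_const
    have hlog : ContinuousAt (Real.logb 2) (4 * (C * (3 + Real.exp (-4 * k)) / 4)) :=
      Real.continuousAt_logb (ne_of_gt (by positivity))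
    exact hlog.comp ((continuous_const.mul continuous_id).continuousAt)
  exact hcont.tendsto.comp h1
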